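/- arXiv:2501.14241 — 8 statements merged into one kernel-verified Lean document; each statement's English description precedes it below -/
import Mathlib

section
/- For every strictly increasing function φ: ℕ → ℕ there exists a continuous family of real ℕ×ℕ matrices Γ(t), t ∈ [0,1], such that Γ(0) is the identity, Γ(1)_{ab} = δ_{a,φ(b)}, Γ(t)_{ab} = 0 whenever a > φ(b), and Γ(t)*Γ(t) = 1 for all t. -/
open Matrix



open Finset

noncomputable def Wf (φ : ℕ → ℕ) (c s : ℝ) (b : ℕ) : ℕ → ℝ :=
  if h : ∃ j, j < b ∧ φ j = b then
    fun a => (if a = b then c else 0) - s * Wf φ c s (Nat.find h) a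
  else fun a => if a = b then 1 else 0
termination_by b
decreasing_by exact (Nat.find_spec h).1

variable (φ : ℕ → ℕ) (c s : ℝ)


lemma Wf_pos {b : ℕ} (h : ∃ j, j < b ∧ φ j = b) (a : ℕ) :
    Wf φ c s b a = (if a = b then c else 0) - s * Wf φ c s (Nat.find h) a := by
  rw [Wf, dif_pos h]

lemma Wf_neg {b : ℕ} (h : ¬ ∃ j, j < b ∧ φ j = b) (a : ℕ) :
    Wf φ c s b a = if a = b then 1 else 0 := by
  rw [Wf, dif_neg h]

lemma W_supp : ∀ b a, b < a → Wf φ c s b a = 0 := by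
  intro b
  induction b using Nat.strong_induction_on with
  | _ b ih =>
    intro a hba
    rw [Wf]
    split
    · rename_i h
      have hj := (Nat.find_spec h).1
      simp [ih _ hj a (lt_trans hj hba), Nat.ne_of_gt hba]
    · simp [Nat.ne_of_gt hba]

lemma W_self (hcs : c^2 + s^2 = 1) :
    ∀ b N, b < N → ∑ a ∈ range N, Wf φ c s b a * Wf φ c s b a = 1 := by
  intro b
  induction b using Nat.strong_induction_on with
  | _ b ih =>
    intro N hbN
    rw [Wf]
    split
    · rename_i h
      have hj := (Nat.find_spec h).1
      set j := Nat.find h with hjdef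
      have expand : ∀ a, ((if a = b then c else 0) - s * Wf φ c s j a) *
          ((if a = b then c else 0) - s * Wf φ c s j a)
          = (if a = b then c*c else 0) - 2*(s*(if a = b then c else 0) * Wf φ c s j a)
            + s^2 * (Wf φ c s j a * Wf φ c s j a) := by
        intro a; by_cases ha : a = b <;> simp [ha] <;> ring
      simp only [expand, Finset.sum_add_distrib, Finset.sum_sub_distrib, ← Finset.mul_sum]
      rw [Finset.sum_ite_eq' (range N) b (fun _ => c*c)]
      have : ∑ a ∈ range N, s * (if a = b then c else 0) * Wf φ c s j a
          = s * c * Wf φ c s j b := by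
        rw [Finset.sum_eq_single b]
        · simp
        · intro a _ hab; simp [hab]
        · intro hb; exact absurd (Finset.mem_range.2 hbN) hb
      rw [this, W_supp φ c s j b hj, ih j hj N (lt_trans hj hbN)]
      simp [Finset.mem_range.2 hbN]
      nlinarith [hcs]
    · have : ∀ a, (if a = b then (1:ℝ) else 0) * (if a = b then (1:ℝ) else 0)
          = if a = b then 1 else 0 := by intro a; by_cases ha : a = b <;> simp [ha]
      simp only [this, Finset.sum_ite_eq' (range N) b (fun _ => (1:ℝ))]
      simp [Finset.mem_range.2 hbN]

lemma find_eq (hφ : Function.Injective φ) {b j : ℕ} (h : ∃ j, j < b ∧ φ j = b)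
    (hj : φ j = b) : Nat.find h = j := hφ (by rw [(Nat.find_spec h).2, hj])

lemma W_orth (hφ : StrictMono φ) (hcs : c^2 + s^2 = 1) :
    ∀ n x y, x + y = n → x ≠ y → y < φ x → x < φ y →
    ∀ N, x < N → y < N → ∑ a ∈ range N, Wf φ c s x a * Wf φ c s y a = 0 := by
  intro n
  induction n using Nat.strong_induction_on with
  | _ n ih =>
    intro x y hxy hne hyx hxfy N hxN hyN
    rcases Nat.lt_or_ge x y with hlt | hge
    · -- expand Wf y
      by_cases h : ∃ j, j < y ∧ φ j = y
      · have hj := (Nat.find_spec h).1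
        set j := Nat.find h with hjdef
        have hfj : φ j = y := (Nat.find_spec h).2
        have expand : ∀ a, Wf φ c s x a * Wf φ c s y a
            = (if a = y then Wf φ c s x a * c else 0) - s * (Wf φ c s x a * Wf φ c s j a) := by
          intro a
          rw [Wf_pos φ c s h, ← hjdef]
          by_cases ha : a = y <;> simp [ha] <;> ring
        simp only [expand, Finset.sum_sub_distrib, ← Finset.mul_sum,
          Finset.sum_ite_eq' (range N) y (fun a => Wf φ c s x a * c)]
        rw [W_supp φ c s x y hlt]
        have hxj : x ≠ j := by
          intro hc; apply absurd hfj; rw [← hc]; omega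
        have := ih (x + j) (by omega) x j rfl hxj
          (by omega) (by rw [hfj]; exact hlt) N hxN (by omega)
        rw [this]; simp
      · have expand : ∀ a, Wf φ c s x a * Wf φ c s y a
            = if a = y then Wf φ c s x a else 0 := by
          intro a
          rw [Wf_neg φ c s h]
          by_cases ha : a = y <;> simp [ha]
        simp only [expand, Finset.sum_ite_eq' (range N) y (fun a => Wf φ c s x a)]
        simp [W_supp φ c s x y hlt]
    · have hlt : y < x := by omega
      -- expand Wf x
      by_cases h : ∃ j, j < x ∧ φ j = x
      · have hj := (Nat.find_spec h).1
        set j := Nat.find h with hjdef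
        have hfj : φ j = x := (Nat.find_spec h).2
        have expand : ∀ a, Wf φ c s x a * Wf φ c s y a
            = (if a = x then c * Wf φ c s y a else 0) - s * (Wf φ c s j a * Wf φ c s y a) := by
          intro a
          conv_lhs => rw [show Wf φ c s x a = (if a = x then c else 0) - s * Wf φ c s j a from by rw [Wf_pos φ c s h, ← hjdef]]
          by_cases ha : a = x <;> simp [ha] <;> ring
        simp only [expand, Finset.sum_sub_distrib, ← Finset.mul_sum,
          Finset.sum_ite_eq' (range N) x (fun a => c * Wf φ c s y a)]
        rw [W_supp φ c s y x hlt]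
        have hjy : j ≠ y := by
          intro hc; apply absurd hfj; rw [hc]; omega
        have := ih (j + y) (by omega) j y rfl hjy
          (by rw [hfj]; exact hlt) (by omega) N (by omega) hyN
        rw [this]; simp
      · have expand : ∀ a, Wf φ c s x a * Wf φ c s y a
            = if a = x then Wf φ c s y a else 0 := by
          intro a
          conv_lhs => rw [show Wf φ c s x a = if a = x then 1 else 0 from Wf_neg φ c s h a]
          by_cases ha : a = x <;> simp [ha]
        simp only [expand, Finset.sum_ite_eq' (range N) x (fun a => Wf φ c s y a)]
        simp [W_supp φ c s y x hlt]

noncomputable def Uf (φ : ℕ → ℕ) (c s : ℝ) (b a : ℕ) : ℝ :=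
  if φ b = b then (if a = b then 1 else 0)
  else s * (if a = φ b then 1 else 0) + c * Wf φ c s b a

lemma U_supp (hφ : StrictMono φ) : ∀ b a, φ b < a → Uf φ c s b a = 0 := by
  intro b a ha
  have hb : b ≤ φ b := hφ.le_apply
  rw [Uf]
  split
  · simp [show a ≠ b by omega]
  · rw [W_supp φ c s b a (by omega)]
    simp [show a ≠ φ b by omega]

lemma U_entry (hφ : StrictMono φ) {b b' : ℕ} (h : b' < b) :
    Uf φ c s b' b = s * (if b = φ b' then 1 else 0) := by
  rw [Uf]
  split
  · rename_i hfix
    simp [show b ≠ b' by omega, show b ≠ φ b' by omega]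
  · rw [W_supp φ c s b' b h]
    ring

lemma W_U_orth (hφ : StrictMono φ) (hcs : c^2 + s^2 = 1) :
    ∀ b b', b' < b → ∀ N, b < N → φ b' < N →
    ∑ a ∈ range N, Wf φ c s b a * Uf φ c s b' a = 0 := by
  intro b
  induction b using Nat.strong_induction_on with
  | _ b ih =>
    intro b' hb' N hbN hfb'N
    by_cases h : ∃ j, j < b ∧ φ j = b
    · have hj := (Nat.find_spec h).1
      set j := Nat.find h with hjdef
      have hfj : φ j = b := (Nat.find_spec h).2
      have expand : ∀ a, Wf φ c s b a * Uf φ c s b' a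
          = (if a = b then c * Uf φ c s b' a else 0) - s * (Wf φ c s j a * Uf φ c s b' a) := by
        intro a
        rw [Wf_pos φ c s h, ← hjdef]
        by_cases ha : a = b <;> simp [ha] <;> ring
      simp only [expand, Finset.sum_sub_distrib, ← Finset.mul_sum,
        Finset.sum_ite_eq' (range N) b (fun a => c * Uf φ c s b' a)]
      rw [U_entry φ c s hφ hb']
      rcases eq_or_ne b' j with rfl | hbj
      · -- b' = j
        have expand2 : ∀ a, Wf φ c s j a * Uf φ c s j a
            = s * (if a = φ j then Wf φ c s j a else 0) + c * (Wf φ c s j a * Wf φ c s j a) := by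
          intro a
          rw [Uf, if_neg (by omega)]
          by_cases ha : a = φ j <;> simp [ha] <;> ring
        rw [show (∑ a ∈ range N, Wf φ c s j a * Uf φ c s j a) =
            s * Wf φ c s j (φ j) + c * 1 from ?_]
        · simp [W_supp φ c s j b hj, hfj, Finset.mem_range.2 hbN]
          ring
        · simp only [expand2, Finset.sum_add_distrib, ← Finset.mul_sum,
            Finset.sum_ite_eq' (range N) (φ j) (fun a => Wf φ c s j a)]
          rw [W_self φ c s hcs j N (by omega)]
          simp [Finset.mem_range.2 (show φ j < N by omega)]
      · have hnfb : b ≠ φ b' := fun hc => hbj (hφ.injective (by rw [hfj, hc]))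
        rw [if_neg hnfb]
        rcases Nat.lt_or_ge b' j with hlt | hge
        · rw [ih j hj b' hlt N (by omega) (by omega)]
          simp [Finset.mem_range.2 hbN]
        · have hjb' : j < b' := by omega
          -- expand U b'
          by_cases hfix : φ b' = b'
          · have expand2 : ∀ a, Wf φ c s j a * Uf φ c s b' a
                = if a = b' then Wf φ c s j a else 0 := by
              intro a
              rw [Uf, if_pos hfix]
              by_cases ha : a = b' <;> simp [ha]
            simp only [expand2, Finset.sum_ite_eq' (range N) b' (fun a => Wf φ c s j a)]
            simp [W_supp φ c s j b' hjb', Finset.mem_range.2 hbN]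
          · have expand2 : ∀ a, Wf φ c s j a * Uf φ c s b' a
                = s * (if a = φ b' then Wf φ c s j a else 0) + c * (Wf φ c s j a * Wf φ c s b' a) := by
              intro a
              rw [Uf, if_neg hfix]
              by_cases ha : a = φ b' <;> simp [ha] <;> ring
            have hb'fb' : b' < φ b' := lt_of_le_of_ne hφ.le_apply (Ne.symm hfix)
            simp only [expand2, Finset.sum_add_distrib, ← Finset.mul_sum,
              Finset.sum_ite_eq' (range N) (φ b') (fun a => Wf φ c s j a)]
            rw [W_supp φ c s j (φ b') (by omega),
              W_orth φ c s hφ hcs (j + b') j b' rfl (by omega) (by rw [hfj]; omega)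
                (by omega) N (by omega) (by omega)]
            simp [Finset.mem_range.2 hbN]
    · have expand : ∀ a, Wf φ c s b a * Uf φ c s b' a
          = if a = b then Uf φ c s b' a else 0 := by
        intro a
        rw [Wf_neg φ c s h]
        by_cases ha : a = b <;> simp [ha]
      simp only [expand, Finset.sum_ite_eq' (range N) b (fun a => Uf φ c s b' a)]
      have : b ≠ φ b' := fun hc => h ⟨b', hb', hc.symm⟩
      simp [U_entry φ c s hφ hb', this, Finset.mem_range.2 hbN]

lemma sm_add (hφ : StrictMono φ) : ∀ a k, φ a + k ≤ φ (a + k) := by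
  intro a k
  induction k with
  | zero => simp
  | succ k ih =>
    have : φ (a + k) < φ (a + k + 1) := hφ (by omega)
    rw [show a + (k+1) = (a+k)+1 from rfl]
    omega

lemma phi_fix (hφ : StrictMono φ) {a b : ℕ} (hb : φ b = b) (hab : a ≤ b) : φ a = a := by
  have h1 : a ≤ φ a := hφ.le_apply
  have h2 := sm_add φ hφ a (b - a)
  rw [show a + (b - a) = b by omega, hb] at h2
  omega

lemma U_norm (hφ : StrictMono φ) (hcs : c^2 + s^2 = 1) (b N : ℕ) (hN : φ b < N) :
    ∑ a ∈ range N, Uf φ c s b a * Uf φ c s b a = 1 := by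
  have hb : b ≤ φ b := hφ.le_apply
  by_cases hfix : φ b = b
  · have : ∀ a, Uf φ c s b a * Uf φ c s b a = if a = b then 1 else 0 := by
      intro a; rw [Uf, if_pos hfix]; by_cases ha : a = b <;> simp [ha]
    simp only [this, Finset.sum_ite_eq' (range N) b (fun _ => (1:ℝ))]
    simp [Finset.mem_range.2 (by omega : b < N)]
  · have hlt : b < φ b := by omega
    have expand : ∀ a, Uf φ c s b a * Uf φ c s b a
        = (if a = φ b then s*s else 0)
          + 2*(c*s*(if a = φ b then Wf φ c s b a else 0))
          + c^2 * (Wf φ c s b a * Wf φ c s b a) := by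
      intro a; rw [Uf, if_neg hfix]; by_cases ha : a = φ b <;> simp [ha] <;> ring
    simp only [expand, Finset.sum_add_distrib, ← Finset.mul_sum,
      Finset.sum_ite_eq' (range N) (φ b) (fun _ => s*s),
      Finset.sum_ite_eq' (range N) (φ b) (fun a => Wf φ c s b a)]
    rw [W_self φ c s hcs b N (by omega)]
    simp [Finset.mem_range.2 hN, W_supp φ c s b (φ b) hlt]
    nlinarith [hcs]

lemma U_orth_lt (hφ : StrictMono φ) (hcs : c^2 + s^2 = 1) {b b' : ℕ} (h : b' < b)
    (N : ℕ) (hN : φ b < N) (hN' : φ b' < N) :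
    ∑ a ∈ range N, Uf φ c s b' a * Uf φ c s b a = 0 := by
  have hb : b ≤ φ b := hφ.le_apply
  by_cases hfix : φ b = b
  · have hfix' : φ b' = b' := phi_fix φ hφ hfix (by omega)
    have : ∀ a, Uf φ c s b' a * Uf φ c s b a
        = if a = b then Uf φ c s b' a else 0 := by
      intro a
      rw [show Uf φ c s b a = (if a = b then (1:ℝ) else 0) from by rw [Uf, if_pos hfix]]
      by_cases ha : a = b <;> simp [ha]
    simp only [this, Finset.sum_ite_eq' (range N) b (fun a => Uf φ c s b' a)]
    have : Uf φ c s b' b = 0 := by rw [Uf, if_pos hfix']; simp [show b ≠ b' by omega]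
    simp [this]
  · have expand : ∀ a, Uf φ c s b' a * Uf φ c s b a
        = s * (if a = φ b then Uf φ c s b' a else 0) + c * (Wf φ c s b a * Uf φ c s b' a) := by
      intro a
      rw [show Uf φ c s b a = s * (if a = φ b then 1 else 0) + c * Wf φ c s b a from by
        rw [Uf, if_neg hfix]]
      by_cases ha : a = φ b <;> simp [ha] <;> ring
    simp only [expand, Finset.sum_add_distrib, ← Finset.mul_sum,
      Finset.sum_ite_eq' (range N) (φ b) (fun a => Uf φ c s b' a)]
    rw [U_supp φ c s hφ b' (φ b) (by exact hφ h), W_U_orth φ c s hφ hcs b b' h N (by omega) hN']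
    simp

lemma U_orthonormal (hφ : StrictMono φ) (hcs : c^2 + s^2 = 1) (b' b N : ℕ)
    (hN : φ b < N) (hN' : φ b' < N) :
    ∑ a ∈ range N, Uf φ c s b' a * Uf φ c s b a = if b' = b then 1 else 0 := by
  rcases lt_trichotomy b' b with h | rfl | h
  · rw [U_orth_lt φ c s hφ hcs h N hN hN', if_neg (by omega)]
  · rw [U_norm φ c s hφ hcs b' N hN, if_pos rfl]
  · rw [show (∑ a ∈ range N, Uf φ c s b' a * Uf φ c s b a)
        = ∑ a ∈ range N, Uf φ c s b a * Uf φ c s b' a from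
      Finset.sum_congr rfl (fun a _ => mul_comm _ _)]
    rw [U_orth_lt φ c s hφ hcs h N hN' hN, if_neg (by omega)]

lemma W_one : ∀ b a, Wf φ 1 0 b a = if a = b then 1 else 0 := by
  intro b
  induction b using Nat.strong_induction_on with
  | _ b ih =>
    intro a
    by_cases h : ∃ j, j < b ∧ φ j = b
    · rw [Wf_pos φ 1 0 h a]; simp
    · rw [Wf_neg φ 1 0 h a]

lemma W_cont : ∀ b a, Continuous (fun p : ℝ × ℝ => Wf φ p.1 p.2 b a) := by
  intro b
  induction b using Nat.strong_induction_on with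
  | _ b ih =>
    intro a
    by_cases h : ∃ j, j < b ∧ φ j = b
    · have heq : ∀ p : ℝ × ℝ, Wf φ p.1 p.2 b a
          = (if a = b then p.1 else 0) - p.2 * Wf φ p.1 p.2 (Nat.find h) a :=
        fun p => Wf_pos φ p.1 p.2 h a
      simp only [heq]
      by_cases ha : a = b
      · simp only [ha, if_pos rfl]
        exact continuous_fst.sub (continuous_snd.mul (ih _ (Nat.find_spec h).1 _))
      · simp only [if_neg ha]
        exact continuous_const.sub (continuous_snd.mul (ih _ (Nat.find_spec h).1 _))
    · have heq : ∀ p : ℝ × ℝ, Wf φ p.1 p.2 b a = if a = b then 1 else 0 :=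
        fun p => Wf_neg φ p.1 p.2 h a
      simp only [heq]
      exact continuous_const

lemma U_cont (b a : ℕ) : Continuous (fun p : ℝ × ℝ => Uf φ p.1 p.2 b a) := by
  rw [show (fun p : ℝ × ℝ => Uf φ p.1 p.2 b a)
      = fun p : ℝ × ℝ => if φ b = b then (if a = b then (1:ℝ) else 0)
          else p.2 * (if a = φ b then 1 else 0) + p.1 * Wf φ p.1 p.2 b a from
    funext fun p => by rw [Uf]]
  by_cases hfix : φ b = b
  · simp only [if_pos hfix]; exact continuous_const
  · simp only [if_neg hfix]
    exact (continuous_snd.mul continuous_const).add (continuous_fst.mul (W_cont φ b a))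


/-- For every strictly increasing `φ : ℕ → ℕ` there is a continuous family of
real ℕ×ℕ matrices `Γ(t)`, `t ∈ [0,1]`, with `Γ(0) = 1`, `Γ(1)_{ab} = δ_{a, φ(b)}`,
`Γ(t)_{ab} = 0` for `a > φ(b)`, and `Γ(t)* Γ(t) = 1` for all `t ∈ [0,1]`. -/
theorem stmt_2 (φ : ℕ → ℕ) (hφ : StrictMono φ) :
    ∃ Γ : ℝ → ℕ → ℕ → ℝ,
      (∀ a b, ContinuousOn (fun t => Γ t a b) (Set.Icc (0 : ℝ) 1)) ∧
      (∀ a b, Γ 0 a b = if a = b then 1 else 0) ∧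
      (∀ a b, Γ 1 a b = if a = φ b then 1 else 0) ∧
      (∀ t ∈ Set.Icc (0 : ℝ) 1, ∀ a b, φ b < a → Γ t a b = 0) ∧
      (∀ t ∈ Set.Icc (0 : ℝ) 1, ∀ b b',
        HasSum (fun a => Γ t a b' * Γ t a b) (if b' = b then 1 else 0)) := by
  refine ⟨fun t a b => Uf φ (Real.cos (Real.pi/2*t)) (Real.sin (Real.pi/2*t)) b a,
    ?_, ?_, ?_, ?_, ?_⟩
  · intro a b
    exact ((U_cont φ b a).comp
      ((Real.continuous_cos.comp (continuous_const.mul continuous_id)).prodMk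
        (Real.continuous_sin.comp (continuous_const.mul continuous_id)))).continuousOn
  · intro a b
    simp only [mul_zero, Real.cos_zero, Real.sin_zero]
    rw [Uf]
    split
    · rfl
    · rw [W_one φ b a]; ring_nf
  · intro a b
    simp only [mul_one, Real.cos_pi_div_two, Real.sin_pi_div_two]
    rw [Uf]
    split
    · rename_i hfix; rw [hfix]
    · ring_nf
  · intro t _ a b hab
    exact U_supp φ _ _ hφ b a hab
  · intro t _ b b'
    have hcs : (Real.cos (Real.pi/2*t))^2 + (Real.sin (Real.pi/2*t))^2 = 1 :=
      Real.cos_sq_add_sin_sq _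
    set cc := Real.cos (Real.pi/2*t)
    set ss := Real.sin (Real.pi/2*t)
    set N := max (φ b) (φ b') + 1 with hNdef
    have hN : φ b < N := lt_of_le_of_lt (le_max_left _ _) (Nat.lt_succ_self _)
    have hN' : φ b' < N := lt_of_le_of_lt (le_max_right _ _) (Nat.lt_succ_self _)
    have hsum := U_orthonormal φ cc ss hφ hcs b' b N hN hN'
    rw [← hsum]
    apply hasSum_sum_of_ne_finset_zero
    intro a ha
    have haN : N ≤ a := by simpa [Finset.mem_range] using ha
    show Uf φ cc ss b' a * Uf φ cc ss b a = 0
    rw [U_supp φ cc ss hφ b a (by omega)]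
    ring
end

section
/- Let A be a positive semidefinite D×D complex matrix, let Q₀ be the orthogonal projection onto the range of a positive semidefinite matrix L₀, and let λ₀ > 0 be the smallest nonzero eigenvalue of L₀. Then for any positive semidefinite L with orthogonal projection Q onto its range, and for every x in the range of L₀ with ‖x‖ ≤ 1, one has ‖Q Q₀ x − Q₀ x‖ ≤ 2 λ₀^{-1} ‖L − L₀‖. -/
open Matrix ComplexOrder

local notation "⟪" x ", " y "⟫" => @inner ℂ _ _ x y

/-- Pointwise norm bound for self-adjoint idempotent CLM. -/
lemma proj_pt_norm {E : Type*} [NormedAddCommGroup E] [InnerProductSpace ℂ E]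
    [CompleteSpace E] (P : E →L[ℂ] E) (hP : star P = P) (hP2 : P * P = P) (v : E) :
    ‖P v‖ ≤ ‖v‖ := by
  have hadj : ContinuousLinearMap.adjoint P = P := by
    rw [← ContinuousLinearMap.star_eq_adjoint, hP]
  have h1 : ⟪P v, P v⟫ = ⟪v, P v⟫ := by
    nth_rewrite 1 [← hadj]
    rw [ContinuousLinearMap.adjoint_inner_left]
    change ⟪v, (P * P) v⟫ = _
    rw [hP2]
  have h2 : ‖P v‖ ^ 2 = RCLike.re ⟪v, P v⟫ := by
    rw [← h1, ← @inner_self_eq_norm_sq ℂ]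
  have h3 : RCLike.re ⟪v, P v⟫ ≤ ‖v‖ * ‖P v‖ := by
    calc RCLike.re ⟪v, P v⟫ ≤ ‖⟪v, P v⟫‖ := RCLike.re_le_norm _
    _ ≤ ‖v‖ * ‖P v‖ := norm_inner_le_norm _ _
  nlinarith [norm_nonneg (P v), norm_nonneg v]

/-- Bounded preimage under a Hermitian matrix with eigenvalue lower bound `l₀` on its range. -/
lemma exists_bounded_preimage (D : ℕ) (L₀ : Matrix (Fin D) (Fin D) ℂ) (hL₀ : L₀.IsHermitian)
    (l₀ : ℝ) (hl₀pos : 0 < l₀)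
    (hl₀min : ∀ i, hL₀.eigenvalues i ≠ 0 → l₀ ≤ hL₀.eigenvalues i)
    (x : EuclideanSpace ℂ (Fin D)) (hx : x ∈ LinearMap.range (Matrix.toEuclideanLin L₀)) :
    ∃ y : EuclideanSpace ℂ (Fin D), Matrix.toEuclideanLin L₀ y = x ∧ ‖y‖ ≤ l₀⁻¹ * ‖x‖ := by
  set T := Matrix.toEuclideanLin L₀ with hT
  set b := hL₀.eigenvectorBasis with hbdef
  set μ := hL₀.eigenvalues with hμdef
  have hsym : T.IsSymmetric := Matrix.isHermitian_iff_isSymmetric.mp hL₀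
  have hb : ∀ i, T (b i) = (μ i : ℂ) • b i := by
    intro i
    have h := hL₀.mulVec_eigenvectorBasis i
    apply (WithLp.equiv 2 (Fin D → ℂ)).injective
    ext j
    have := congrFun h j
    simpa [hT, Matrix.toEuclideanLin_apply] using this
  -- coefficients of x on null eigenvectors vanish
  obtain ⟨z, hz⟩ := hx
  have horth : ∀ i, μ i = 0 → ⟪b i, x⟫ = 0 := by
    intro i hi
    rw [← hz, ← hsym (b i) z, hb i, hi]
    simp
  -- construct the preimage
  set c : Fin D → ℂ := fun i => if μ i = 0 then 0 else ((μ i : ℂ))⁻¹ * ⟪b i, x⟫ with hc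
  refine ⟨∑ i, c i • b i, ?_, ?_⟩
  · rw [map_sum]
    have : ∀ i, T (c i • b i) = ⟪b i, x⟫ • b i := by
      intro i
      rw [_root_.map_smul, hb i]
      by_cases hi : μ i = 0
      · simp [hc, hi, horth i hi]
      · have hne : (μ i : ℂ) ≠ 0 := by exact_mod_cast hi
        simp only [hc, if_neg hi, smul_smul]
        congr 1
        field_simp
    simp_rw [this]
    exact b.sum_repr' x
  · -- norm estimate
    have hy' : (∑ i, c i • b i) = b.repr.symm ((WithLp.equiv 2 (Fin D → ℂ)).symm c) := by
      rw [← b.sum_repr_symm]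
      rfl
    rw [hy', LinearIsometryEquiv.norm_map]
    have hxr : ‖x‖ = ‖b.repr x‖ := (LinearIsometryEquiv.norm_map b.repr x).symm
    rw [hxr, EuclideanSpace.norm_eq, EuclideanSpace.norm_eq]
    rw [show l₀⁻¹ = Real.sqrt (l₀⁻¹ ^ 2) by
      rw [Real.sqrt_sq (by positivity)]]
    rw [← Real.sqrt_mul (by positivity)]
    apply Real.sqrt_le_sqrt
    rw [Finset.mul_sum]
    apply Finset.sum_le_sum
    intro i _
    have hrx : b.repr x i = ⟪b i, x⟫ := b.repr_apply_apply x i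
    have hci : ‖(WithLp.equiv 2 (Fin D → ℂ)).symm c i‖ = ‖c i‖ := rfl
    rw [hci, hrx]
    by_cases hi : μ i = 0
    · simp [hc, hi]
      positivity
    · have hμpos : 0 < μ i := lt_of_lt_of_le hl₀pos (hl₀min i hi)
      have : ‖c i‖ = (μ i)⁻¹ * ‖⟪b i, x⟫‖ := by
        simp only [hc, if_neg hi, norm_mul]
        congr 1
        rw [norm_inv]
        congr 1
        rw [Complex.norm_real, Real.norm_eq_abs, abs_of_pos hμpos]
      rw [this, mul_pow]
      gcongr
      exact hl₀min i hi
  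
/-- If `Q₀` is the orthogonal projection onto the range of the positive semidefinite
matrix `L₀`, `λ₀ > 0` is the smallest nonzero eigenvalue of `L₀`, and `Q` is the orthogonal
projection onto the range of a positive semidefinite `L`, then for every `x` in the range of `L₀`
with `‖x‖ ≤ 1` one has `‖Q Q₀ x − Q₀ x‖ ≤ 2 λ₀⁻¹ ‖L − L₀‖`. -/
theorem stmt_4 (D : ℕ) (L₀ L Q₀ Q : Matrix (Fin D) (Fin D) ℂ)
    (hL₀ : L₀.PosSemidef) (hL : L.PosSemidef)
    (hQ₀herm : Q₀ᴴ = Q₀) (hQ₀idem : Q₀ * Q₀ = Q₀)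
    (hQ₀range : LinearMap.range Q₀.mulVecLin = LinearMap.range L₀.mulVecLin)
    (hQherm : Qᴴ = Q) (hQidem : Q * Q = Q)
    (hQrange : LinearMap.range Q.mulVecLin = LinearMap.range L.mulVecLin)
    (l₀ : ℝ) (hl₀pos : 0 < l₀)
    (hl₀mem : ∃ i, hL₀.1.eigenvalues i = l₀)
    (hl₀min : ∀ i, hL₀.1.eigenvalues i ≠ 0 → l₀ ≤ hL₀.1.eigenvalues i)
    (x : EuclideanSpace ℂ (Fin D))
    (hx : x ∈ LinearMap.range (Matrix.toEuclideanLin L₀)) (hxnorm : ‖x‖ ≤ 1) :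
    ‖Matrix.toEuclideanCLM (𝕜 := ℂ) (Q * Q₀) x - Matrix.toEuclideanCLM (𝕜 := ℂ) Q₀ x‖
      ≤ 2 * l₀⁻¹ * ‖Matrix.toEuclideanCLM (𝕜 := ℂ) (L - L₀)‖ := by
  set f := Matrix.toEuclideanCLM (𝕜 := ℂ) (n := Fin D) with hf
  have fapp : ∀ (M : Matrix (Fin D) (Fin D) ℂ) (v : EuclideanSpace ℂ (Fin D)),
      f M v = Matrix.toEuclideanLin M v := fun M v =>
    DFunLike.congr_fun (Matrix.coe_toEuclideanCLM_eq_toEuclideanLin M) v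
  -- projections act as identity on the relevant ranges
  have key : ∀ (M N : Matrix (Fin D) (Fin D) ℂ), N * N = N →
      LinearMap.range N.mulVecLin = LinearMap.range M.mulVecLin →
      ∀ (v : EuclideanSpace ℂ (Fin D)), f N (f M v) = f M v := by
    intro M N hN hrange v
    obtain ⟨w, hw⟩ : M *ᵥ (WithLp.equiv 2 _ v) ∈ LinearMap.range N.mulVecLin := by
      rw [hrange]; exact ⟨WithLp.equiv 2 _ v, rfl⟩
    rw [Matrix.mulVecLin_apply] at hw
    apply (WithLp.equiv 2 ((Fin D) → ℂ)).injective
    show Matrix.toLin' N (Matrix.toLin' M (WithLp.equiv 2 _ v)) = Matrix.toLin' M (WithLp.equiv 2 _ v)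
    simp only [Matrix.toLin'_apply]
    rw [← hw, Matrix.mulVec_mulVec, hN]
  -- Q₀ fixes x
  obtain ⟨z, hz⟩ := hx
  have hP₀x : f Q₀ x = x := by
    rw [← hz, ← fapp L₀ z]
    exact key L₀ Q₀ hQ₀idem hQ₀range z
  -- bounded preimage of x
  obtain ⟨y, hy, hynorm⟩ := exists_bounded_preimage D L₀ hL₀.1 l₀ hl₀pos hl₀min x ⟨z, hz⟩
  have hyc : f L₀ y = x := by rw [fapp L₀ y]; exact hy
  have hQL : ∀ v, f Q (f L v) = f L v := key L Q hQidem hQrange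
  -- algebraic identity
  have e1 : f (Q * Q₀) x - f Q₀ x = f Q (f (L₀ - L) y) - f (L₀ - L) y := by
    rw [_root_.map_mul, ContinuousLinearMap.mul_apply, hP₀x, ← hyc, _root_.map_sub]
    simp only [ContinuousLinearMap.sub_apply]
    rw [ContinuousLinearMap.map_sub, hQL y]
    abel
  rw [e1]
  -- norm estimates
  have hstar : star (f Q) = f Q := by
    have h : (star Q) = Q := by rw [Matrix.star_eq_conjTranspose, hQherm]
    rw [← StarHomClass.map_star, h]
  have hmul : f Q * f Q = f Q := by rw [← _root_.map_mul, hQidem]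
  have hb1 : ‖f Q (f (L₀ - L) y)‖ ≤ ‖f (L₀ - L) y‖ := proj_pt_norm _ hstar hmul _
  have hb2 : ‖f (L₀ - L) y‖ ≤ ‖f (L - L₀)‖ * ‖y‖ := by
    have hneg : f (L₀ - L) = - f (L - L₀) := by rw [← _root_.map_neg, neg_sub]
    rw [hneg, ContinuousLinearMap.neg_apply, norm_neg]
    exact (f (L - L₀)).le_opNorm y
  have hynorm' : ‖y‖ ≤ l₀⁻¹ := by
    calc ‖y‖ ≤ l₀⁻¹ * ‖x‖ := hynorm
    _ ≤ l₀⁻¹ * 1 := by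
        have h0 : (0:ℝ) ≤ l₀⁻¹ := by positivity
        nlinarith
    _ = l₀⁻¹ := mul_one _
  calc ‖f Q (f (L₀ - L) y) - f (L₀ - L) y‖
      ≤ ‖f Q (f (L₀ - L) y)‖ + ‖f (L₀ - L) y‖ := norm_sub_le _ _
    _ ≤ ‖f (L - L₀)‖ * ‖y‖ + ‖f (L - L₀)‖ * ‖y‖ := by
        have := hb1.trans hb2; linarith [hb2]
    _ = 2 * (‖f (L - L₀)‖ * ‖y‖) := by ring
    _ ≤ 2 * (‖f (L - L₀)‖ * l₀⁻¹) := by gcongr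
    _ = 2 * l₀⁻¹ * ‖f (L - L₀)‖ := by ring
end

section
/- Let E: M_χ(ℂ) → M_χ(ℂ) be the completely positive map E(B) = Σ_{i=1}^d (K^i)* B K^i, where K^1,...,K^d span M_χ(ℂ) and Σ_i K^i (K^i)* = 1. If A is a D×D matrix of block form A^i = X · [[K^i, 0],[M^i, 0]] · X* with X unitary, and B ∈ M_D(ℂ) satisfies Σ_i (A^i)* B A^i = B, then X* B X has the block form [[B', 0],[0, 0]] with Σ_i (K^i)* B' K^i = B'. -/
open Matrix

theorem sum_fromBlocks {n p q r s : Type*} [Fintype n] {R : Type*} [AddCommMonoid R]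
    (f : n → Matrix p q R) (g : n → Matrix p s R) (h : n → Matrix r q R)
    (k : n → Matrix r s R) :
    ∑ i, Matrix.fromBlocks (f i) (g i) (h i) (k i) =
      Matrix.fromBlocks (∑ i, f i) (∑ i, g i) (∑ i, h i) (∑ i, k i) := by
  ext (x | x) (y | y) <;>
    simp [Matrix.fromBlocks, Matrix.sum_apply]

/-- For `A^i = X [[K^i, 0],[M^i, 0]] X*` with `X` unitary and `K` a
right-normalized injective MPS tensor, any fixed point `B` of `B ↦ Σ_i (A^i)* B A^i` has
`X* B X` of block form `[[B', 0],[0,0]]` with `Σ_i (K^i)* B' K^i = B'`. -/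
theorem stmt_7 (d χ m : ℕ)
    (K : Fin d → Matrix (Fin χ) (Fin χ) ℂ)
    (hspan : Submodule.span ℂ (Set.range K) = ⊤)
    (hnorm : ∑ i, K i * (K i)ᴴ = 1)
    (M : Fin d → Matrix (Fin m) (Fin χ) ℂ)
    (X : Matrix (Fin χ ⊕ Fin m) (Fin χ ⊕ Fin m) ℂ)
    (hX : X ∈ Matrix.unitaryGroup (Fin χ ⊕ Fin m) ℂ)
    (A : Fin d → Matrix (Fin χ ⊕ Fin m) (Fin χ ⊕ Fin m) ℂ)
    (hA : ∀ i, A i = X * Matrix.fromBlocks (K i) 0 (M i) 0 * Xᴴ)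
    (B : Matrix (Fin χ ⊕ Fin m) (Fin χ ⊕ Fin m) ℂ)
    (hB : ∑ i, (A i)ᴴ * B * A i = B) :
    ∃ B' : Matrix (Fin χ) (Fin χ) ℂ,
      Xᴴ * B * X = Matrix.fromBlocks B' 0 0 0 ∧ ∑ i, (K i)ᴴ * B' * K i = B' := by
  have hXX : Xᴴ * X = 1 := hX.1
  have hXX' : X * Xᴴ = 1 := hX.2
  set C : Matrix (Fin χ ⊕ Fin m) (Fin χ ⊕ Fin m) ℂ := Xᴴ * B * X with hCdef
  set F : Fin d → Matrix (Fin χ ⊕ Fin m) (Fin χ ⊕ Fin m) ℂ :=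
    fun i => Matrix.fromBlocks (K i) 0 (M i) 0 with hFdef
  have hC : ∑ i, (F i)ᴴ * C * F i = C := by
    have h1 : ∑ i, (A i)ᴴ * B * A i = X * (∑ i, (F i)ᴴ * C * F i) * Xᴴ := by
      rw [Finset.mul_sum, Finset.sum_mul]
      refine Finset.sum_congr rfl fun i _ => ?_
      rw [hA i]
      simp only [conjTranspose_mul, conjTranspose_conjTranspose, hCdef]
      simp only [hFdef, Matrix.mul_assoc]
    rw [h1] at hB
    calc ∑ i, (F i)ᴴ * C * F i
        = (Xᴴ * X) * (∑ i, (F i)ᴴ * C * F i) * (Xᴴ * X) := by rw [hXX]; simp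
      _ = Xᴴ * (X * (∑ i, (F i)ᴴ * C * F i) * Xᴴ) * X := by simp [Matrix.mul_assoc]
      _ = C := by rw [hB]
  -- block decomposition of C
  have hCb : C = Matrix.fromBlocks C.toBlocks₁₁ C.toBlocks₁₂ C.toBlocks₂₁ C.toBlocks₂₂ :=
    (Matrix.fromBlocks_toBlocks C).symm
  have hterm : ∀ i, (F i)ᴴ * C * F i =
      Matrix.fromBlocks
        ((K i)ᴴ * C.toBlocks₁₁ * K i + (K i)ᴴ * C.toBlocks₁₂ * M i
          + ((M i)ᴴ * C.toBlocks₂₁ * K i + (M i)ᴴ * C.toBlocks₂₂ * M i)) 0 0 0 := by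
    intro i
    conv_lhs => rw [hCb]
    simp [hFdef, Matrix.fromBlocks_conjTranspose, Matrix.fromBlocks_multiply,
      Matrix.mul_assoc, Matrix.mul_add, Matrix.add_mul]
    abel
  have hsum : Matrix.fromBlocks
      (∑ i, ((K i)ᴴ * C.toBlocks₁₁ * K i + (K i)ᴴ * C.toBlocks₁₂ * M i
        + ((M i)ᴴ * C.toBlocks₂₁ * K i + (M i)ᴴ * C.toBlocks₂₂ * M i)))
      0 0 0 = C := by
    rw [Finset.sum_congr rfl fun i _ => hterm i, sum_fromBlocks] at hC
    simp only [Finset.sum_const_zero] at hC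
    exact hC
  have h12 : C.toBlocks₁₂ = 0 := by
    have := congrArg Matrix.toBlocks₁₂ hsum
    simpa [Matrix.toBlocks_fromBlocks₁₂] using this.symm
  have h21 : C.toBlocks₂₁ = 0 := by
    have := congrArg Matrix.toBlocks₂₁ hsum
    simpa [Matrix.toBlocks_fromBlocks₂₁] using this.symm
  have h22 : C.toBlocks₂₂ = 0 := by
    have := congrArg Matrix.toBlocks₂₂ hsum
    simpa [Matrix.toBlocks_fromBlocks₂₂] using this.symm
  have h11 : ∑ i, (K i)ᴴ * C.toBlocks₁₁ * K i = C.toBlocks₁₁ := by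
    have := congrArg Matrix.toBlocks₁₁ hsum
    rw [Matrix.toBlocks_fromBlocks₁₁] at this
    simpa [h12, h21, h22] using this
  refine ⟨C.toBlocks₁₁, ?_, h11⟩
  show C = _
  rw [h12, h21, h22] at hCb
  exact hCb
end

section
/- Let K^1,...,K^d span M_χ(ℂ), let δ ≥ 0 and t ∈ [0,1], and suppose f := f_{t,δ}(L(K)) is a nonzero positive semidefinite matrix (where L(K) = Σ_i (K^i)* K^i). Then R := Σ_i K^i f² (K^i)* is positive definite (invertible). -/
open Matrix ComplexOrder

private lemma aux_sum_mulVec {n : Type*} [Fintype n] {d : ℕ}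
    (M : Fin d → Matrix n n ℂ) (x : n → ℂ) :
    (∑ i, M i) *ᵥ x = ∑ i, M i *ᵥ x :=
  map_sum (AddMonoidHom.mk' (fun A : Matrix n n ℂ => A *ᵥ x)
    (fun a b => Matrix.add_mulVec a b x)) _ _

private lemma aux_dot_sum {n : Type*} [Fintype n] {d : ℕ}
    (v : Fin d → (n → ℂ)) (x : n → ℂ) :
    star x ⬝ᵥ (∑ i, v i) = ∑ i, star x ⬝ᵥ v i :=
  map_sum (AddMonoidHom.mk' (fun w : n → ℂ => star x ⬝ᵥ w)
    (fun a b => dotProduct_add _ a b)) _ _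

private lemma aux_quad {n : Type*} [Fintype n] (A : Matrix n n ℂ) (x : n → ℂ) :
    star x ⬝ᵥ (Aᴴ * A) *ᵥ x = star (A *ᵥ x) ⬝ᵥ (A *ᵥ x) := by
  rw [← Matrix.mulVec_mulVec, Matrix.dotProduct_mulVec, ← Matrix.star_mulVec]

/-- If `K^1, ..., K^d` span `M_χ(ℂ)` and `f = f_{t,δ}(L(K))` is a nonzero
(positive semidefinite) matrix, then `R = Σ_i K^i f² (K^i)*` is positive definite. -/
theorem stmt_10 (d χ : ℕ) (K : Fin d → Matrix (Fin χ) (Fin χ) ℂ)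
    (hspan : Submodule.span ℂ (Set.range K) = ⊤)
    (t δ : ℝ) (ht0 : 0 ≤ t) (ht1 : t ≤ 1) (hδ : 0 ≤ δ)
    (hL : (∑ i, (K i)ᴴ * K i).IsHermitian)
    (f : Matrix (Fin χ) (Fin χ) ℂ)
    (hf : f = hL.cfc (fun x => if x ≤ t * δ then 0 else Real.sqrt (1 - t * δ / x)))
    (hfne : f ≠ 0) :
    (∑ i, K i * (f * f) * (K i)ᴴ).PosDef := by
  -- f is Hermitian
  have hfH : f.IsHermitian := by
    rw [hf]
    unfold Matrix.IsHermitian.cfc Matrix.IsHermitian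
    have hD : (diagonal (RCLike.ofReal ∘ (fun x => if x ≤ t * δ then 0 else
        Real.sqrt (1 - t * δ / x)) ∘ hL.eigenvalues) : Matrix (Fin χ) (Fin χ) ℂ)ᴴ
        = diagonal (RCLike.ofReal ∘ (fun x => if x ≤ t * δ then 0 else
        Real.sqrt (1 - t * δ / x)) ∘ hL.eigenvalues) := by
      rw [diagonal_conjTranspose]
      refine congrArg diagonal (funext fun i => ?_)
      simp [Pi.star_apply, Function.comp_apply, RCLike.star_def, RCLike.conj_ofReal]
    simp only [Matrix.star_eq_conjTranspose, conjTranspose_mul, conjTranspose_conjTranspose,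
      hD, mul_assoc, Unitary.conjStarAlgAut_apply]
  -- rewrite each term as Bᴴ * B
  have hterm : ∀ i, K i * (f * f) * (K i)ᴴ = (f * (K i)ᴴ)ᴴ * (f * (K i)ᴴ) := by
    intro i
    simp only [conjTranspose_mul, conjTranspose_conjTranspose, hfH.eq]
    simp [mul_assoc]
  -- PosSemidef of the sum
  have hps : (∑ i, K i * (f * f) * (K i)ᴴ).PosSemidef := by
    refine Finset.sum_induction _ Matrix.PosSemidef
      (fun a b ha hb => ha.add hb) (Matrix.PosSemidef.zero) (fun i _ => ?_)
    rw [hterm i]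
    exact Matrix.posSemidef_conjTranspose_mul_self _
  refine posDef_iff_dotProduct_mulVec.mpr ⟨hps.1, fun x hx => ?_⟩
  rcases lt_or_eq_of_le (hps.dotProduct_mulVec_nonneg x) with h | h
  · exact h
  exfalso
  have hx' : star x ⬝ᵥ x ≠ 0 := fun h0 =>
    hx (dotProduct_star_self_eq_zero.mp h0)
  -- from equality 0, each f * (K i)ᴴ *ᵥ x = 0
  have hzero : ∀ i, (f * (K i)ᴴ) *ᵥ x = 0 := by
    intro i
    have hsum : ∑ i, star x ⬝ᵥ ((f * (K i)ᴴ)ᴴ * (f * (K i)ᴴ)) *ᵥ x = 0 := by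
      simp_rw [← hterm]
      rw [← aux_dot_sum, ← aux_sum_mulVec]
      exact h.symm
    have hnn : ∀ i ∈ Finset.univ, (0:ℂ) ≤ star x ⬝ᵥ ((f * (K i)ᴴ)ᴴ * (f * (K i)ᴴ)) *ᵥ x :=
      fun i _ => (Matrix.posSemidef_conjTranspose_mul_self (f * (K i)ᴴ)).dotProduct_mulVec_nonneg x
    have heach : star x ⬝ᵥ ((f * (K i)ᴴ)ᴴ * (f * (K i)ᴴ)) *ᵥ x = 0 :=
      (Finset.sum_eq_zero_iff_of_nonneg hnn).mp hsum i (Finset.mem_univ i)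
    rw [aux_quad] at heach
    exact dotProduct_star_self_eq_zero.mp heach
  -- linear functional vanishing on range K
  let φ : Matrix (Fin χ) (Fin χ) ℂ →ₗ[ℂ] (Fin χ → ℂ) :=
    { toFun := fun A => (star x) ᵥ* (A * f)
      map_add' := by intro A B; simp [add_mul, Matrix.vecMul_add]
      map_smul' := by
        intro c A
        ext l
        simp [Matrix.vecMul, dotProduct, Finset.mul_sum, mul_left_comm, mul_assoc]
      }
  have hφK : ∀ i, φ (K i) = 0 := by
    intro i
    have := congrArg star (hzero i)
    rw [Matrix.star_mulVec, star_zero, conjTranspose_mul, conjTranspose_conjTranspose,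
      hfH.eq] at this
    simpa [φ, Matrix.vecMul_vecMul, Matrix.mul_assoc] using this
  have hφ : ∀ A, φ A = 0 := by
    intro A
    have hA : A ∈ Submodule.span ℂ (Set.range K) := hspan ▸ Submodule.mem_top
    induction hA using Submodule.span_induction with
    | mem a ha => obtain ⟨i, rfl⟩ := ha; exact hφK i
    | zero => simp
    | add a b _ _ ha hb => rw [map_add, ha, hb, add_zero]
    | smul c a _ ha => rw [LinearMap.map_smul, ha, smul_zero]
  -- every row vector killed by f on the left
  have hrow : ∀ w : Fin χ → ℂ, w ᵥ* f = 0 := by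
    intro w
    have hsurj : star x ᵥ* (Matrix.vecMulVec ((star x ⬝ᵥ x)⁻¹ • x) w) = w := by
      ext l
      show (star x ⬝ᵥ fun k => Matrix.vecMulVec ((star x ⬝ᵥ x)⁻¹ • x) w k l) = w l
      simp only [dotProduct, Matrix.vecMulVec_apply, Pi.smul_apply,
        smul_eq_mul, Pi.star_apply]
      have h1 : ∀ k ∈ Finset.univ, star (x k) * ((∑ i, star (x i) * x i)⁻¹ * x k * w l)
          = (∑ i, star (x i) * x i)⁻¹ * w l * (star (x k) * x k) := fun k _ => by ring
      rw [Finset.sum_congr rfl h1, ← Finset.mul_sum,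
        mul_comm ((∑ i, star (x i) * x i)⁻¹) (w l), mul_assoc,
        inv_mul_cancel₀ (show (∑ i, star (x i) * x i) ≠ 0 from hx'), mul_one]
    have h0 : (star x) ᵥ* (Matrix.vecMulVec ((star x ⬝ᵥ x)⁻¹ • x) w * f) = 0 :=
      hφ (Matrix.vecMulVec ((star x ⬝ᵥ x)⁻¹ • x) w)
    rw [← Matrix.vecMul_vecMul, hsurj] at h0
    exact h0
  apply hfne
  ext j k
  have := congrFun (hrow (Pi.single j 1)) k
  rwa [Matrix.single_one_vecMul] at this
end

section
/- Let p: E → B be a fiber bundle whose fiber F is path-connected, where E and B are obtained as sequential colimits along closed embeddings of spaces on which p restricts to Hurewicz fibrations. Then p has the homotopy lifting property with respect to all compact spaces; in particular p is a Serre fibration. -/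
open Matrix

open unitInterval

lemma stage_of_compact {X : Type} [TopologicalSpace X] (An : ℕ → Set X)
    (hmono : Monotone An) (hT1 : ∀ n, T1Space (An n))
    (hunion : ⋃ n, An n = Set.univ)
    (hfinal : ∀ C : Set X, (∀ n, IsClosed ((Subtype.val : An n → X) ⁻¹' C)) → IsClosed C)
    {K : Set X} (hK : IsCompact K) : ∃ n, K ⊆ An n := by
  by_contra h
  push_neg at h
  simp only [Set.not_subset] at h
  choose x hxK hxA using h
  have key : ∀ T ⊆ Set.range x, IsClosed T := by
    intro T hT
    apply hfinal
    intro m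
    haveI := hT1 m
    have hfin : ((Subtype.val : An m → X) ⁻¹' T).Finite := by
      have hsub : (Subtype.val : An m → X) ⁻¹' T ⊆ Subtype.val ⁻¹' (x '' Set.Iio m) := by
        rintro ⟨a, ha⟩ haT
        obtain ⟨k, rfl⟩ := hT haT
        simp only [Set.mem_preimage] at *
        refine ⟨k, ?_, rfl⟩
        by_contra hk
        simp only [Set.mem_Iio, not_lt] at hk
        exact hxA k (hmono hk ha)
      exact Set.Finite.subset (Set.Finite.preimage Subtype.val_injective.injOn
        ((Set.finite_Iio m).image x)) hsub
    exact hfin.isClosed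
  have hcl : IsClosed (Set.range x) := key _ subset_rfl
  have hcmp : IsCompact (Set.range x) := hK.of_isClosed_subset hcl (Set.range_subset_iff.2 hxK)
  haveI : DiscreteTopology ↥(Set.range x) := by
    rw [discreteTopology_iff_isOpen_singleton]
    intro a
    have : ({a} : Set ↥(Set.range x)) =
        Subtype.val ⁻¹' (Set.range x \ {(a : X)})ᶜ := by
      ext b
      simp [Subtype.ext_iff, b.2]
    rw [this]
    exact (key _ Set.diff_subset).isOpen_compl.preimage continuous_subtype_val
  have hfin := hcmp.finite (isDiscrete_iff_discreteTopology.mpr ‹_›)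
  -- but range x is infinite
  haveI : Finite ↥(Set.range x) := hfin
  obtain ⟨a, ha⟩ := Finite.exists_infinite_fiber (fun n => (⟨x n, Set.mem_range_self n⟩ : ↥(Set.range x)))
  have haU : (a : X) ∈ ⋃ n, An n := hunion ▸ Set.mem_univ _
  obtain ⟨m, hm⟩ := Set.mem_iUnion.1 haU
  have hinf : Set.Infinite ((fun n => (⟨x n, Set.mem_range_self n⟩ : ↥(Set.range x))) ⁻¹' {a}) :=
    Set.infinite_coe_iff.1 ha
  obtain ⟨k, hk, hmk⟩ := hinf.exists_gt m
  have : x k = (a : X) := congrArg Subtype.val hk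
  exact hxA k (hmono hmk.le (this ▸ hm))


/-- `p` has the homotopy lifting property with respect to `Z`. -/
def HasHLP {E B : Type} [TopologicalSpace E] [TopologicalSpace B] (p : E → B)
    (Z : Type) [TopologicalSpace Z] : Prop :=
  ∀ (H : C(Z × I, B)) (h₀ : C(Z, E)), (∀ z, p (h₀ z) = H (z, 0)) →
    ∃ H' : C(Z × I, E), (∀ z, H' (z, 0) = h₀ z) ∧ ∀ q, p (H' q) = H q

/-- If `E` and `B` are sequential colimits of increasing sequences of closed `T₁`
subspaces along which the continuous map `p : E → B` restricts to Hurewicz fibrations, then `p`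
has the homotopy lifting property with respect to all compact spaces (in particular, `p` is a
Serre fibration). -/
theorem stmt_15 {E B : Type} [TopologicalSpace E] [TopologicalSpace B]
    (En : ℕ → Set E) (Bn : ℕ → Set B)
    (hEmono : Monotone En) (hBmono : Monotone Bn)
    (hEclosed : ∀ n, IsClosed (En n)) (hBclosed : ∀ n, IsClosed (Bn n))
    (hEunion : ⋃ n, En n = Set.univ) (hBunion : ⋃ n, Bn n = Set.univ)
    (hET1 : ∀ n, T1Space (En n)) (hBT1 : ∀ n, T1Space (Bn n))
    (hEfinal : ∀ C : Set E, (∀ n, IsClosed ((Subtype.val : En n → E) ⁻¹' C)) → IsClosed C)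
    (hBfinal : ∀ C : Set B, (∀ n, IsClosed ((Subtype.val : Bn n → B) ⁻¹' C)) → IsClosed C)
    (p : E → B) (hp : Continuous p)
    (hmaps : ∀ n, Set.MapsTo p (En n) (Bn n))
    (hfib : ∀ n, ∀ (Z : Type) [TopologicalSpace Z],
      HasHLP (Set.MapsTo.restrict p (En n) (Bn n) (hmaps n)) Z) :
    ∀ (Z : Type) [TopologicalSpace Z] [CompactSpace Z], HasHLP p Z := by
  intro Z _ _ H h₀ hcompat
  obtain ⟨m, hm⟩ := stage_of_compact En hEmono hET1 hEunion hEfinal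
    (isCompact_range h₀.continuous)
  obtain ⟨n, hn⟩ := stage_of_compact Bn hBmono hBT1 hBunion hBfinal
    (isCompact_range H.continuous)
  set N := max m n with hN
  have hh₀ : ∀ z, h₀ z ∈ En N := fun z => hEmono (le_max_left m n) (hm (Set.mem_range_self z))
  have hH : ∀ q, H q ∈ Bn N := fun q => hBmono (le_max_right m n) (hn (Set.mem_range_self q))
  let Ht : C(Z × I, Bn N) := ⟨fun q => ⟨H q, hH q⟩, H.continuous.subtype_mk _⟩
  let h₀t : C(Z, En N) := ⟨fun z => ⟨h₀ z, hh₀ z⟩, h₀.continuous.subtype_mk _⟩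
  obtain ⟨H'', hH''0, hH''p⟩ := hfib N Z Ht h₀t (fun z => Subtype.ext (hcompat z))
  refine ⟨⟨fun q => (H'' q : E), continuous_subtype_val.comp H''.continuous⟩, ?_, ?_⟩
  · intro z
    exact congrArg Subtype.val (hH''0 z)
  · intro q
    exact congrArg Subtype.val (hH''p q)
end

section
/- Let X be a topological space that is the colimit of an increasing sequence of T₁ subspaces X₁ ⊂ X₂ ⊂ ⋯ (X carries the final topology). If A ⊂ X is compactly generated in the subspace topology, then the subspace topology on A coincides with the final topology induced by the inclusions A ∩ X_n ↪ A (each A ∩ X_n with the subspace topology from X). -/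
open Matrix

/-- Any finite set is contained in some `Xn n` when the `Xn` are monotone and cover `X`. -/
lemma stmt_16_finite_subset {X : Type} (Xn : ℕ → Set X) (hmono : Monotone Xn)
    (hunion : ⋃ n, Xn n = Set.univ) {S : Set X} (hS : S.Finite) : ∃ n, S ⊆ Xn n := by
  have hmem : ∀ p : X, p ∈ ⋃ n, Xn n := fun p => hunion ▸ Set.mem_univ p
  choose idx hidx using fun p => Set.mem_iUnion.mp (hmem p)
  refine ⟨hS.toFinset.sup idx, fun p hp => ?_⟩
  exact hmono (Finset.le_sup (hS.mem_toFinset.mpr hp)) (hidx p)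

/-- A compact subset of the colimit of an increasing sequence of T₁ subspaces is contained
in some `Xn n`. -/
lemma stmt_16_compact_subset {X : Type} [TopologicalSpace X]
    (Xn : ℕ → Set X) (hmono : Monotone Xn)
    (hT1 : ∀ n, T1Space (Xn n))
    (hunion : ⋃ n, Xn n = Set.univ)
    (hfinal : ∀ C : Set X,
      IsClosed C ↔ ∀ n, IsClosed ((Subtype.val : Xn n → X) ⁻¹' C))
    {S : Set X} (hS : IsCompact S) : ∃ n, S ⊆ Xn n := by
  by_contra h
  push_neg at h
  choose x hxS hxn using fun n => Set.not_subset.mp (h n)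
  -- every subset of the range of `x` is closed in `X`
  have key : ∀ T : Set X, T ⊆ Set.range x → IsClosed T := by
    intro T hT
    rw [hfinal]
    intro n
    haveI := hT1 n
    have hsub : (Subtype.val : Xn n → X) ⁻¹' T ⊆ Subtype.val ⁻¹' (x '' Set.Iio n) := by
      rintro ⟨y, hy⟩ hyT
      obtain ⟨k, rfl⟩ := hT hyT
      refine Set.mem_image_of_mem x ?_
      by_contra hk
      exact hxn k (hmono (not_lt.mp hk) hy)
    have hfin : ((Subtype.val : Xn n → X) ⁻¹' T).Finite := by
      refine Set.Finite.subset ?_ hsub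
      exact Set.Finite.preimage (Subtype.val_injective.injOn)
        (((Set.finite_Iio n).image x))
    exact hfin.isClosed
  set D := Set.range x with hD
  have hDS : D ⊆ S := by rintro _ ⟨k, rfl⟩; exact hxS k
  have hDclosed : IsClosed D := key D le_rfl
  have hDcompact : IsCompact D := hS.of_isClosed_subset hDclosed hDS
  have hdiscrete : DiscreteTopology D := by
    rw [discreteTopology_iff_forall_isClosed]
    intro s
    have : IsClosed (Subtype.val '' s : Set X) :=
      key _ (by rintro p ⟨q, _, rfl⟩; exact q.2)
    have hs : s = Subtype.val ⁻¹' (Subtype.val '' s : Set X) := by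
      rw [Set.preimage_image_eq _ Subtype.val_injective]
    rw [hs]
    exact this.preimage continuous_subtype_val
  have hDfin : D.Finite := hDcompact.finite (isDiscrete_iff_discreteTopology.mpr hdiscrete)
  obtain ⟨n, hn⟩ := stmt_16_finite_subset Xn hmono hunion hDfin
  exact hxn n (hn ⟨n, rfl⟩)

/-- If `X` carries the final topology of an increasing sequence of `T₁`
subspaces `Xₙ` and `A ⊆ X` is compactly generated in the subspace topology, then the subspace
topology on `A` coincides with the final topology induced by the inclusions `A ∩ Xₙ ↪ A`. -/
theorem stmt_16 {X : Type} [TopologicalSpace X]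
    (Xn : ℕ → Set X) (hmono : Monotone Xn)
    (hT1 : ∀ n, T1Space (Xn n))
    (hunion : ⋃ n, Xn n = Set.univ)
    (hfinal : ∀ C : Set X,
      IsClosed C ↔ ∀ n, IsClosed ((Subtype.val : Xn n → X) ⁻¹' C))
    (A : Set X)
    (hcg : ∀ C : Set A,
      (∀ (K : Type) [TopologicalSpace K] [CompactSpace K] [T2Space K]
        (f : K → A), Continuous f → IsClosed (f ⁻¹' C)) → IsClosed C)
    (C : Set A) :
    IsClosed C ↔
      ∀ n, IsClosed ((fun x : ↥(A ∩ Xn n) => (⟨x.1, x.2.1⟩ : A)) ⁻¹' C) := by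
  constructor
  · intro hC n
    have hcont : Continuous (fun x : ↥(A ∩ Xn n) => (⟨x.1, x.2.1⟩ : A)) :=
      Continuous.subtype_mk continuous_subtype_val _
    exact hC.preimage hcont
  · intro h
    apply hcg
    intro K _ _ _ f hf
    have hgc : Continuous ((Subtype.val : A → X) ∘ f) := continuous_subtype_val.comp hf
    have hcomp : IsCompact (Set.range ((Subtype.val : A → X) ∘ f)) :=
      isCompact_range hgc
    obtain ⟨n, hn⟩ := stmt_16_compact_subset Xn hmono hT1 hunion hfinal hcomp
    have hmem : ∀ k : K, ((f k : X) ∈ A ∩ Xn n) :=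
      fun k => ⟨(f k).2, hn ⟨k, rfl⟩⟩
    set g : K → ↥(A ∩ Xn n) := fun k => ⟨(f k : X), hmem k⟩ with hg
    have hgcont : Continuous g := Continuous.subtype_mk hgc _
    have heq : f ⁻¹' C = g ⁻¹' ((fun x : ↥(A ∩ Xn n) => (⟨x.1, x.2.1⟩ : A)) ⁻¹' C) := by
      ext k
      simp only [Set.mem_preimage, hg]
    rw [heq]
    exact (h n).preimage hgcont
end

section
/- Let K ∈ M_2(ℂ)^4 be the family K(g) defined by K^1(g) = sqrt(1−g²)·1, K^2(g) = sqrt(2/3)·g·E_{12}, K^3(g) = sqrt(1/3)·g·diag(−1,1), K^4(g) = −sqrt(2/3)·g·E_{21}, for g ∈ (0,1). Then the map 𝔼_1(B) = Σ_i K^i(g)* B K^i(g) is self-adjoint with spectrum {1, 1 − (4/3)g²}, where the eigenvalue 1 − (4/3)g² has multiplicity three, and its unique positive, invertible, trace-one fixed point is T = (1/2)·1. -/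
open Matrix ComplexOrder

/-- The interpolating family of MPS tensors between a product state (`g = 0`) and the AKLT
state (`g = 1`). -/
noncomputable def Kg (g : ℝ) : Fin 4 → Matrix (Fin 2) (Fin 2) ℂ :=
  ![((Real.sqrt (1 - g ^ 2) : ℝ) : ℂ) • 1,
    ((Real.sqrt (2 / 3) * g : ℝ) : ℂ) • !![0, 1; 0, 0],
    ((Real.sqrt (1 / 3) * g : ℝ) : ℂ) • !![-1, 0; 0, 1],
    (-(Real.sqrt (2 / 3) * g : ℝ) : ℂ) • !![0, 0; 1, 0]]

lemma key (g : ℝ) (hg : g ^ 2 ≤ 1) (B : Matrix (Fin 2) (Fin 2) ℂ) :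
    (∑ i, (LinearMap.mulLeft ℂ ((Kg g i)ᴴ)).comp (LinearMap.mulRight ℂ (Kg g i))) B
    = !![(1 - (2/3) * (g:ℂ)^2) * B 0 0 + ((2/3) * (g:ℂ)^2) * B 1 1,
          (1 - (4/3) * (g:ℂ)^2) * B 0 1;
          (1 - (4/3) * (g:ℂ)^2) * B 1 0,
          ((2/3) * (g:ℂ)^2) * B 0 0 + (1 - (2/3) * (g:ℂ)^2) * B 1 1] := by
  have h1 : ((Real.sqrt (1 - g ^ 2) : ℝ) : ℂ) ^ 2 = 1 - (g:ℂ)^2 := by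
    rw [← Complex.ofReal_pow, Real.sq_sqrt (by linarith)]; push_cast; ring
  have h2 : ((Real.sqrt (2/3) : ℝ) : ℂ) ^ 2 = 2/3 := by
    rw [← Complex.ofReal_pow, Real.sq_sqrt (by norm_num)]; norm_num
  have h3 : ((Real.sqrt (1/3) : ℝ) : ℂ) ^ 2 = 1/3 := by
    rw [← Complex.ofReal_pow, Real.sq_sqrt (by norm_num)]; norm_num
  have hs2 : ((Real.sqrt 2 : ℝ) : ℂ) ^ 2 = 2 := by
    rw [← Complex.ofReal_pow, Real.sq_sqrt (by norm_num)]; norm_num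
  have hs3 : (((Real.sqrt 3 : ℝ) : ℂ)⁻¹) ^ 2 = 1/3 := by
    rw [← Complex.ofReal_inv, ← Complex.ofReal_pow, inv_pow, Real.sq_sqrt (by norm_num)]
    norm_num
  simp only [Fin.sum_univ_four, LinearMap.add_apply, LinearMap.comp_apply,
    LinearMap.mulLeft_apply, LinearMap.mulRight_apply, Kg]
  ext i j
  fin_cases i <;> fin_cases j <;>
    simp [Matrix.mul_apply, Fin.sum_univ_two, Matrix.conjTranspose_apply] <;>
    ring_nf <;> simp only [h1, hs2, hs3] <;> ring

/-- the transfer map `𝔼₁(B) = Σ_i K^i(g)* B K^i(g)` is self-adjoint for the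
Hilbert–Schmidt inner product, has spectrum `{1, 1 − (4/3)g²}` with the eigenvalue
`1 − (4/3)g²` triply degenerate, and its unique positive invertible trace-one fixed point is
`(1/2)·1`. -/
theorem stmt_17 (g : ℝ) (hg : g ∈ Set.Ioo (0 : ℝ) 1)
    (T : Matrix (Fin 2) (Fin 2) ℂ →ₗ[ℂ] Matrix (Fin 2) (Fin 2) ℂ)
    (hT : T = ∑ i, (LinearMap.mulLeft ℂ ((Kg g i)ᴴ)).comp (LinearMap.mulRight ℂ (Kg g i))) :
    (∀ A B : Matrix (Fin 2) (Fin 2) ℂ, ((T A)ᴴ * B).trace = (Aᴴ * T B).trace) ∧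
    spectrum ℂ (T : Module.End ℂ (Matrix (Fin 2) (Fin 2) ℂ))
      = {1, 1 - (4 / 3) * (g : ℂ) ^ 2} ∧
    Module.finrank ℂ
      (Module.End.eigenspace (T : Module.End ℂ (Matrix (Fin 2) (Fin 2) ℂ))
        (1 - (4 / 3) * (g : ℂ) ^ 2)) = 3 ∧
    T ((1 / 2 : ℂ) • 1) = (1 / 2 : ℂ) • 1 ∧
    (∀ S : Matrix (Fin 2) (Fin 2) ℂ, S.PosDef → S.trace = 1 → T S = S →
      S = (1 / 2 : ℂ) • 1) := by
  obtain ⟨hg0, hg1⟩ := hg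
  have hgle : g ^ 2 ≤ 1 := by nlinarith
  have hK : ∀ B, T B = !![(1 - (2/3) * (g:ℂ)^2) * B 0 0 + ((2/3) * (g:ℂ)^2) * B 1 1,
          (1 - (4/3) * (g:ℂ)^2) * B 0 1;
          (1 - (4/3) * (g:ℂ)^2) * B 1 0,
          ((2/3) * (g:ℂ)^2) * B 0 0 + (1 - (2/3) * (g:ℂ)^2) * B 1 1] := by
    intro B; rw [hT]; exact key g hgle B
  have hg2 : ((g:ℂ))^2 ≠ 0 := pow_ne_zero _ (Complex.ofReal_ne_zero.mpr hg0.ne')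
  have hlne : (1 - (4/3) * (g:ℂ)^2) ≠ 1 := fun h =>
    hg2 (by linear_combination (-3/4 : ℂ) * h)
  have heig1 : T 1 = (1 : ℂ) • (1 : Matrix (Fin 2) (Fin 2) ℂ) := by
    rw [hK]
    ext i j
    fin_cases i <;> fin_cases j <;>
      simp [Matrix.one_apply, Matrix.smul_apply, smul_eq_mul] <;> ring
  have heig2 : T !![0,1;0,0] = (1 - (4/3) * (g:ℂ)^2) • !![(0:ℂ),1;0,0] := by
    rw [hK]
    ext i j
    fin_cases i <;> fin_cases j <;>
      simp [Matrix.smul_apply, smul_eq_mul]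
  refine ⟨?_, ?_, ?_, ?_, ?_⟩
  · -- self-adjointness
    intro A B
    rw [hK A, hK B]
    simp only [Matrix.trace_fin_two_of, Matrix.trace_fin_two, Matrix.mul_apply,
      Fin.sum_univ_two, Matrix.conjTranspose_apply, Matrix.of_apply, Matrix.cons_val',
      Matrix.cons_val_zero, Matrix.cons_val_one, Matrix.head_cons, Matrix.head_fin_const,
      Matrix.empty_val', Matrix.cons_val_fin_one]
    simp only [map_add, map_sub, _root_.map_mul, map_neg, map_div₀, map_pow, map_ofNat, _root_.map_one,
      Complex.star_def, Complex.conj_ofReal]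
    ring
  · -- spectrum
    ext μ
    rw [← Module.End.hasEigenvalue_iff_mem_spectrum]
    simp only [Set.mem_insert_iff, Set.mem_singleton_iff]
    constructor
    · intro h
      obtain ⟨B, hB⟩ := h.exists_hasEigenvector
      have hEq : T B = μ • B := hB.apply_eq_smul
      have hB0 : B ≠ 0 := hB.right
      rw [hK B] at hEq
      have e00 := congrFun (congrFun hEq 0) 0
      have e01 := congrFun (congrFun hEq 0) 1
      have e10 := congrFun (congrFun hEq 1) 0
      have e11 := congrFun (congrFun hEq 1) 1
      simp only [Matrix.smul_apply, smul_eq_mul, Matrix.of_apply, Matrix.cons_val',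
        Matrix.cons_val_zero, Matrix.cons_val_one, Matrix.head_cons,
        Matrix.empty_val', Matrix.cons_val_fin_one, Matrix.head_fin_const] at e00 e01 e10 e11
      by_contra hc
      push_neg at hc
      obtain ⟨hm1, hm2⟩ := hc
      have hy : B 0 1 = 0 := by
        have := mul_eq_zero.mp (show ((1 - (4/3) * (g:ℂ)^2) - μ) * B 0 1 = 0 by
          linear_combination e01)
        rcases this with h | h
        · exact absurd (by linear_combination h) hm2.symm
        · exact h
      have hz : B 1 0 = 0 := by
        have := mul_eq_zero.mp (show ((1 - (4/3) * (g:ℂ)^2) - μ) * B 1 0 = 0 by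
          linear_combination e10)
        rcases this with h | h
        · exact absurd (by linear_combination h) hm2.symm
        · exact h
      have hsum : B 0 0 + B 1 1 = 0 := by
        have := mul_eq_zero.mp (show ((1:ℂ) - μ) * (B 0 0 + B 1 1) = 0 by
          linear_combination e00 + e11)
        rcases this with h | h
        · exact absurd (by linear_combination h) hm1.symm
        · exact h
      have hdiff : B 0 0 - B 1 1 = 0 := by
        have := mul_eq_zero.mp (show ((1 - (4/3) * (g:ℂ)^2) - μ) * (B 0 0 - B 1 1) = 0 by
          linear_combination e00 - e11)
        rcases this with h | h
        · exact absurd (by linear_combination h) hm2.symm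
        · exact h
      apply hB0
      ext i j
      fin_cases i <;> fin_cases j
      · show B 0 0 = 0; linear_combination (1/2 : ℂ) * hsum + (1/2 : ℂ) * hdiff
      · exact hy
      · exact hz
      · show B 1 1 = 0; linear_combination (1/2 : ℂ) * hsum - (1/2 : ℂ) * hdiff
    · rintro (rfl | rfl)
      · exact Module.End.hasEigenvalue_of_hasEigenvector
          ⟨Module.End.mem_eigenspace_iff.mpr heig1, one_ne_zero⟩
      · refine Module.End.hasEigenvalue_of_hasEigenvector
          ⟨Module.End.mem_eigenspace_iff.mpr heig2, fun h => ?_⟩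
        have := congrFun (congrFun h 0) 1
        simp at this
  · -- finrank of eigenspace
    have hker : Module.End.eigenspace (T : Module.End ℂ (Matrix (Fin 2) (Fin 2) ℂ))
        (1 - (4/3) * (g:ℂ)^2) = LinearMap.ker (Matrix.traceLinearMap (Fin 2) ℂ ℂ) := by
      ext B
      rw [Module.End.mem_eigenspace_iff, LinearMap.mem_ker]
      show _ ↔ B.trace = 0
      rw [Matrix.trace_fin_two, hK B]
      constructor
      · intro hEq
        have e00 := congrFun (congrFun hEq 0) 0
        simp only [Matrix.smul_apply, smul_eq_mul, Matrix.of_apply, Matrix.cons_val',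
          Matrix.cons_val_zero, Matrix.cons_val_one, Matrix.head_cons,
          Matrix.empty_val', Matrix.cons_val_fin_one, Matrix.head_fin_const] at e00
        have h2 : ((2/3 : ℂ) * (g:ℂ)^2) * (B 0 0 + B 1 1) = 0 := by linear_combination e00
        rcases mul_eq_zero.mp h2 with h | h
        · exact absurd (by linear_combination (3/2 : ℂ) * h) hg2
        · exact h
      · intro htr
        ext i j
        fin_cases i <;> fin_cases j <;> simp [Matrix.smul_apply]
        · linear_combination ((2/3 : ℂ) * (g:ℂ)^2) * htr
        · linear_combination ((2/3 : ℂ) * (g:ℂ)^2) * htr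
    rw [hker]
    have hsurj : Function.Surjective (Matrix.traceLinearMap (Fin 2) ℂ ℂ) := by
      intro c
      exact ⟨!![c, 0; 0, 0], by simp [Matrix.trace_fin_two]⟩
    have hrank := LinearMap.finrank_range_add_finrank_ker (Matrix.traceLinearMap (Fin 2) ℂ ℂ)
    rw [LinearMap.range_eq_top.mpr hsurj, finrank_top, Module.finrank_self] at hrank
    have hdim : Module.finrank ℂ (Matrix (Fin 2) (Fin 2) ℂ) = 4 := by
      simp [Module.finrank_matrix]
    rw [hdim] at hrank
    omega
  · -- fixed point
    rw [hK]
    ext i j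
    fin_cases i <;> fin_cases j <;>
      simp [Matrix.one_apply, Matrix.smul_apply, smul_eq_mul] <;> ring
  · -- uniqueness
    intro S _ htr hfix
    rw [hK S] at hfix
    have e00 := congrFun (congrFun hfix 0) 0
    have e01 := congrFun (congrFun hfix 0) 1
    have e10 := congrFun (congrFun hfix 1) 0
    simp only [Matrix.of_apply, Matrix.cons_val', Matrix.cons_val_zero, Matrix.cons_val_one,
      Matrix.head_cons, Matrix.empty_val', Matrix.cons_val_fin_one,
      Matrix.head_fin_const] at e00 e01 e10
    rw [Matrix.trace_fin_two] at htr
    have hy : S 0 1 = 0 := by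
      rcases mul_eq_zero.mp (show ((4/3 : ℂ) * (g:ℂ)^2) * S 0 1 = 0 by
        linear_combination -e01) with h | h
      · exact absurd (by linear_combination (3/4 : ℂ) * h) hg2
      · exact h
    have hz : S 1 0 = 0 := by
      rcases mul_eq_zero.mp (show ((4/3 : ℂ) * (g:ℂ)^2) * S 1 0 = 0 by
        linear_combination -e10) with h | h
      · exact absurd (by linear_combination (3/4 : ℂ) * h) hg2
      · exact h
    have hxw : S 0 0 = S 1 1 := by
      rcases mul_eq_zero.mp (show ((2/3 : ℂ) * (g:ℂ)^2) * (S 1 1 - S 0 0) = 0 by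
        linear_combination e00) with h | h
      · exact absurd (by linear_combination (3/2 : ℂ) * h) hg2
      · linear_combination -h
    ext i j
    fin_cases i <;> fin_cases j <;>
      simp [Matrix.one_apply, Matrix.smul_apply, smul_eq_mul]
    · linear_combination (1/2 : ℂ) * htr + (1/2 : ℂ) * hxw
    · exact hy
    · exact hz
    · linear_combination (1/2 : ℂ) * htr - (1/2 : ℂ) * hxw
end

section
/- Let D' > D ≥ χ, let L be a χ×χ-bond-dimension injective MPS tensor (d-tuple of χ×χ matrices spanning M_χ(ℂ)), let Y ∈ U(D') be written in 3×3 block form with blocks of sizes χ, D−χ, D'−D, and suppose the last D'−D columns of Y·[[L,0,0],[N₁,0,0],[N₂,0,0]]·Y* are zero (for some matrices N₁, N₂). Then the bottom-left block Y₃₁ of Y is zero. -/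
open Matrix

/-- If `Y ∈ U(D')` in 3×3 block form (blocks of sizes `χ`, `D−χ`, `D'−D`) and the
last `D'−D` columns of each `Y [[L,0,0],[N₁,0,0],[N₂,0,0]] Y*` vanish, where the `L^i` span
`M_χ(ℂ)`, then the bottom-left block `Y₃₁` of `Y` is zero. -/
theorem stmt_19 (d χ a b : ℕ)
    (L : Fin d → Matrix (Fin χ) (Fin χ) ℂ)
    (hspan : Submodule.span ℂ (Set.range L) = ⊤)
    (N₁ : Fin d → Matrix (Fin a) (Fin χ) ℂ)
    (N₂ : Fin d → Matrix (Fin b) (Fin χ) ℂ)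
    (Y : Matrix (Fin χ ⊕ (Fin a ⊕ Fin b)) (Fin χ ⊕ (Fin a ⊕ Fin b)) ℂ)
    (hY : Y ∈ Matrix.unitaryGroup (Fin χ ⊕ (Fin a ⊕ Fin b)) ℂ)
    (hzero : ∀ (i : Fin d) (r : Fin χ ⊕ (Fin a ⊕ Fin b)) (c : Fin b),
      (Y * Matrix.fromBlocks (L i) (0 : Matrix (Fin χ) (Fin a ⊕ Fin b) ℂ) (Matrix.fromRows (N₁ i) (N₂ i)) (0 : Matrix (Fin a ⊕ Fin b) (Fin a ⊕ Fin b) ℂ) * Yᴴ)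
        r (Sum.inr (Sum.inr c)) = 0) :
    ∀ (r : Fin b) (c : Fin χ), Y (Sum.inr (Sum.inr r)) (Sum.inl c) = 0 := by
  intro r c
  have hYY : Yᴴ * Y = 1 := Matrix.mem_unitaryGroup_iff'.mp hY
  -- the vector formed by the relevant column of Yᴴ
  set v : Fin χ → ℂ := fun q => Yᴴ (Sum.inl q) (Sum.inr (Sum.inr r)) with hv
  have hMv : ∀ i : Fin d, (L i).mulVec v = 0 := by
    intro i
    funext p
    set M : Matrix (Fin χ ⊕ (Fin a ⊕ Fin b)) (Fin χ ⊕ (Fin a ⊕ Fin b)) ℂ :=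
      Matrix.fromBlocks (L i) (0 : Matrix (Fin χ) (Fin a ⊕ Fin b) ℂ)
        (Matrix.fromRows (N₁ i) (N₂ i)) (0 : Matrix (Fin a ⊕ Fin b) (Fin a ⊕ Fin b) ℂ) with hM
    have h1 : (M * Yᴴ) (Sum.inl p) (Sum.inr (Sum.inr r)) = 0 := by
      have : M * Yᴴ = Yᴴ * (Y * M * Yᴴ) := by
        rw [← mul_assoc, ← mul_assoc, hYY, one_mul]
      rw [this, Matrix.mul_apply]
      apply Finset.sum_eq_zero
      intro k _
      rw [hzero i k r]
      ring
    have h2 : (M * Yᴴ) (Sum.inl p) (Sum.inr (Sum.inr r))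
        = ∑ q : Fin χ, L i p q * v q := by
      rw [Matrix.mul_apply, Fintype.sum_sum_type]
      simp [hM, hv]
    rw [h2] at h1
    simpa [Matrix.mulVec, dotProduct] using h1
  have hall : ∀ A : Matrix (Fin χ) (Fin χ) ℂ, A.mulVec v = 0 := by
    intro A
    have hA : A ∈ Submodule.span ℂ (Set.range L) := by
      rw [hspan]; exact Submodule.mem_top
    induction hA using Submodule.span_induction with
    | mem x hx => obtain ⟨i, rfl⟩ := hx; exact hMv i
    | zero => simp [Matrix.zero_mulVec]
    | add x y _ _ hx hy => rw [Matrix.add_mulVec, hx, hy, add_zero]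
    | smul t x _ hx => rw [Matrix.smul_mulVec, hx, smul_zero]
  have hv0 : v = 0 := by
    have := hall 1
    rwa [Matrix.one_mulVec] at this
  have : v c = 0 := by rw [hv0]; rfl
  have : Yᴴ (Sum.inl c) (Sum.inr (Sum.inr r)) = 0 := this
  simpa [Matrix.conjTranspose_apply, star_eq_zero] using this
end
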